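/- If z lies in the basin of attraction of infinity for f_c(z) = z^2 + c, then the limit lim_{n→∞} (1/2^n) · log⁺|f_c^n(z)| exists and is positive (this limit is the value of the Green's function of the filled Julia set at z). -/

import Mathlib

open Filter

theorem green_function_exists (c z : ℂ)
    (hz : Tendsto (fun n => ‖(fun w => w ^ 2 + c)^[n] z‖) atTop atTop) :
    ∃ G : ℝ, 0 < G ∧
      Tendsto (fun n : ℕ =>
        (1 / 2 ^ n : ℝ) * max (Real.log (‖(fun w => w ^ 2 + c)^[n] z‖)) 0)
        atTop (nhds G) := by
  set f : ℂ → ℂ := fun w => w ^ 2 + c with hf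
  set R : ℝ := ‖c‖ + 4 with hRdef
  have hR4 : (4 : ℝ) ≤ R := le_add_of_nonneg_left (norm_nonneg c)
  have hlog2pos : (0 : ℝ) < Real.log 2 := Real.log_pos (by norm_num)
  -- key estimate
  have key : ∀ w : ℂ, R ≤ ‖w‖ →
      (R ≤ ‖f w‖ ∧
       2 * Real.log (‖w‖) - Real.log 2 ≤ Real.log (‖f w‖) ∧
       Real.log (‖f w‖) ≤ 2 * Real.log (‖w‖) + Real.log 2) := by
    intro w hw
    have hw4 : (4 : ℝ) ≤ ‖w‖ := le_trans hR4 hw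
    have hwpos : (0 : ℝ) < ‖w‖ := by linarith
    have hcw : ‖c‖ ≤ ‖w‖ := by
      have : ‖c‖ ≤ R := by rw [hRdef]; linarith
      linarith
    have habs2 : ‖w ^ 2‖ = ‖w‖ ^ 2 := by simp [map_pow]
    have hup : ‖f w‖ ≤ 2 * ‖w‖ ^ 2 := by
      have h1 : ‖w ^ 2 + c‖ ≤ ‖w ^ 2‖ + ‖c‖ :=
        norm_add_le _ _
      have h2 : ‖w‖ ≤ ‖w‖ ^ 2 := by nlinarith
      simp only [hf]
      nlinarith
    have hlo : ‖w‖ ^ 2 / 2 ≤ ‖f w‖ := by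
      have h1 : ‖w ^ 2‖ ≤ ‖w ^ 2 + c‖ + ‖c‖ := by
        have h := norm_add_le (w ^ 2 + c) (-c)
        simpa using h
      simp only [hf]
      nlinarith
    have hfwR : R ≤ ‖f w‖ := by nlinarith
    refine ⟨hfwR, ?_, ?_⟩
    · have h1 : Real.log (‖w‖ ^ 2 / 2) ≤ Real.log (‖f w‖) :=
        Real.log_le_log (by positivity) hlo
      have h2 : Real.log (‖w‖ ^ 2 / 2)
          = 2 * Real.log (‖w‖) - Real.log 2 := by
        rw [Real.log_div (by positivity) (by norm_num), Real.log_pow]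
        push_cast; ring
      linarith
    · have h1 : Real.log (‖f w‖) ≤ Real.log (2 * ‖w‖ ^ 2) := by
        apply Real.log_le_log _ hup
        have : (0 : ℝ) < ‖f w‖ := by nlinarith
        exact this
      have h2 : Real.log (2 * ‖w‖ ^ 2)
          = 2 * Real.log (‖w‖) + Real.log 2 := by
        rw [Real.log_mul (by norm_num) (by positivity), Real.log_pow]
        push_cast; ring
      linarith
  -- find N with R ≤ |f^[N] z|
  obtain ⟨N, hN⟩ := (hz.eventually_ge_atTop R).exists
  -- invariance
  have hinv : ∀ n : ℕ, R ≤ ‖f^[N + n] z‖ := by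
    intro n
    induction n with
    | zero => simpa using hN
    | succ k ih =>
      have : f^[N + (k + 1)] z = f (f^[N + k] z) := by
        rw [show N + (k + 1) = (N + k) + 1 from rfl, Function.iterate_succ_apply']
      rw [this]
      exact (key _ ih).1
  set L : ℕ → ℝ := fun n => Real.log (‖f^[N + n] z‖) with hL
  have hstep : ∀ n : ℕ, 2 * L n - Real.log 2 ≤ L (n + 1) ∧
      L (n + 1) ≤ 2 * L n + Real.log 2 := by
    intro n
    have h := key _ (hinv n)
    have he : f^[N + (n + 1)] z = f (f^[N + n] z) := by
      rw [show N + (n + 1) = (N + n) + 1 from rfl, Function.iterate_succ_apply']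
    constructor
    · simp only [hL, he]; exact h.2.1
    · simp only [hL, he]; exact h.2.2
  set b : ℕ → ℝ := fun n => L n / 2 ^ (N + n) with hb
  -- Cauchy
  have hcauchy : CauchySeq b := by
    apply cauchySeq_of_le_geometric (1 / 2) (Real.log 2 / 2 ^ (N + 1)) (by norm_num)
    intro n
    rw [Real.dist_eq]
    have h := hstep n
    have h2 : (0 : ℝ) < 2 ^ (N + n + 1) := by positivity
    have e : b n - b (n + 1) = (2 * L n - L (n + 1)) / 2 ^ (N + n + 1) := by
      simp only [hb]
      rw [show N + (n + 1) = (N + n) + 1 from rfl]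
      field_simp
      ring
    have hpow : (2 : ℝ) ^ (N + n + 1) = 2 ^ (N + 1) * 2 ^ n := by
      rw [← pow_add]; ring_nf
    have hrhs : Real.log 2 / 2 ^ (N + 1) * (1 / 2) ^ n
        = Real.log 2 / 2 ^ (N + n + 1) := by
      rw [div_pow, one_pow, hpow]
      field_simp
    rw [e, abs_div, abs_of_pos h2, hrhs, div_le_div_iff₀ h2 h2]
    have : |2 * L n - L (n + 1)| ≤ Real.log 2 := by
      rw [abs_le]; constructor <;> linarith [h.1, h.2]
    nlinarith [abs_nonneg (2 * L n - L (n + 1))]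
  obtain ⟨G, hG⟩ := cauchySeq_tendsto_of_complete hcauchy
  -- lower bound for L
  have hlow : ∀ n : ℕ, 2 ^ n * Real.log 2 + Real.log 2 ≤ L n := by
    intro n
    induction n with
    | zero =>
      have h1 : Real.log 4 ≤ L 0 := by
        apply Real.log_le_log (by norm_num)
        linarith [hinv 0, hR4]
      have h4 : Real.log 4 = 2 * Real.log 2 := by
        rw [show (4 : ℝ) = 2 ^ 2 by norm_num, Real.log_pow]; push_cast; ring
      simp only [pow_zero]
      linarith
    | succ k ih =>
      have h := (hstep k).1
      have hp : (0 : ℝ) < 2 ^ k := by positivity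
      have : (2 : ℝ) ^ (k + 1) = 2 * 2 ^ k := by ring
      rw [this]
      nlinarith
  have hbn : ∀ n : ℕ, Real.log 2 / 2 ^ N ≤ b n := by
    intro n
    have h := hlow n
    have hp1 : (0 : ℝ) < 2 ^ N := by positivity
    have hp2 : (0 : ℝ) < 2 ^ (N + n) := by positivity
    simp only [hb]
    rw [div_le_div_iff₀ hp1 hp2]
    have hpow : (2 : ℝ) ^ (N + n) = 2 ^ N * 2 ^ n := pow_add 2 N n
    nlinarith [hp1, hlog2pos]
  have hGpos : 0 < G := by
    have : Real.log 2 / 2 ^ N ≤ G := ge_of_tendsto' hG hbn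
    have : (0 : ℝ) < Real.log 2 / 2 ^ N := by positivity
    linarith [ge_of_tendsto' hG hbn]
  refine ⟨G, hGpos, ?_⟩
  -- the shifted sequence converges to G
  have hs : Tendsto (fun n : ℕ => Real.log (‖f^[n] z‖) / 2 ^ n)
      atTop (nhds G) := by
    rw [← tendsto_add_atTop_iff_nat N]
    apply hG.congr
    intro n
    simp only [hb, hL, Nat.add_comm]
  apply hs.congr'
  filter_upwards [eventually_ge_atTop N] with n hn
  have hRn : R ≤ ‖f^[n] z‖ := by
    have := hinv (n - N)
    rwa [Nat.add_sub_cancel' hn] at this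
  have hpos : 0 ≤ Real.log (‖f^[n] z‖) := by
    have : Real.log 1 ≤ Real.log (‖f^[n] z‖) :=
      Real.log_le_log (by norm_num) (by linarith)
    simpa using this
  rw [max_eq_left hpos]
  rw [one_div, inv_mul_eq_div]
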